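/- Let h₁, h₂ be lower unitriangular matrices over ℤ[v,v⁻¹] indexed by finite posets, each satisfying \bar{h_i} = h_i⁻¹, and let d_i be the unique lower unitriangular matrices with off-diagonal entries in v⁻¹ℤ[v⁻¹] satisfying d_i = \bar{d_i} h_i. Then the Kronecker product d₁ ⊗ d₂ is the unique lower unitriangular matrix with off-diagonal entries in v⁻¹ℤ[v⁻¹] satisfying d₁ ⊗ d₂ = \overline{d₁ ⊗ d₂} (h₁ ⊗ h₂). -/

import Mathlib

open LaurentPolynomial

/-- The ring `ℤ[v,v⁻¹]` of Laurent polynomials with integer coefficients. -/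
abbrev L : Type := LaurentPolynomial ℤ

/-- The bar involution `v ↦ v⁻¹` applied entrywise to a matrix. -/
noncomputable def barMat {ι : Type*} (m : Matrix ι ι L) : Matrix ι ι L :=
  fun i j => invert (m i j)

/-- A matrix indexed by a poset is lower unitriangular if its diagonal entries are `1`
and the `(x,y)` entry vanishes unless `y ≤ x`. -/
def Unitri {ι : Type*} [PartialOrder ι] (m : Matrix ι ι L) : Prop :=
  (∀ i, m i i = 1) ∧ ∀ i j, ¬ j ≤ i → m i j = 0

/-- A Laurent polynomial lies in `v⁻¹ℤ[v⁻¹]`, i.e. is supported on negative exponents. -/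
def NegPow (p : L) : Prop := ∀ k : ℤ, 0 ≤ k → AddMonoidAlgebra.coeff p k = 0

/-- The Kronecker product of matrices indexed by posets `S` and `T`, indexed by `S × T`
with the product order. -/
noncomputable def kron {S T : Type*} (a : Matrix S S L) (b : Matrix T T L) : Matrix (S × T) (S × T) L :=
  fun p q => a p.1 q.1 * b p.2 q.2

/- Auxiliary lemmas -/

lemma negPow_mul {a b : L} (ha : NegPow a) (hb : ∀ k : ℤ, 0 < k → b.coeff k = 0) :
    NegPow (a * b) := by
  intro k hk
  rw [AddMonoidAlgebra.mul_apply, Finsupp.sum]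
  apply Finset.sum_eq_zero
  intro a₁ ha₁
  rw [Finsupp.sum]
  apply Finset.sum_eq_zero
  intro a₂ ha₂
  rw [if_neg]
  intro h
  have h1 : a₁ < 0 := by
    by_contra h'
    exact (Finsupp.mem_support_iff.mp ha₁) (ha a₁ (le_of_not_gt h'))
  have h2 : a₂ ≤ 0 := by
    by_contra h'
    exact (Finsupp.mem_support_iff.mp ha₂) (hb a₂ (lt_of_not_ge h'))
  omega

lemma negPow_mul' {a b : L} (ha : ∀ k : ℤ, 0 < k → a.coeff k = 0) (hb : NegPow b) :
    NegPow (a * b) := by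
  intro k hk
  rw [AddMonoidAlgebra.mul_apply, Finsupp.sum]
  apply Finset.sum_eq_zero
  intro a₁ ha₁
  rw [Finsupp.sum]
  apply Finset.sum_eq_zero
  intro a₂ ha₂
  rw [if_neg]
  intro h
  have h1 : a₁ ≤ 0 := by
    by_contra h'
    exact (Finsupp.mem_support_iff.mp ha₁) (ha a₁ (lt_of_not_ge h'))
  have h2 : a₂ < 0 := by
    by_contra h'
    exact (Finsupp.mem_support_iff.mp ha₂) (hb a₂ (le_of_not_gt h'))
  omega

lemma one_coeff_pos (k : ℤ) (hk : 0 < k) : (1 : L).coeff k = 0 := by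
  have : (1 : L).coeff = Finsupp.single 0 1 := rfl
  rw [this, Finsupp.single_apply, if_neg (by omega)]

/-- Entries of a unitriangular matrix with `NegPow` off-diagonal entries have no
positive powers. -/
lemma entries_nonpos {ι : Type*} [PartialOrder ι] {m : Matrix ι ι L} (hU : Unitri m)
    (hN : ∀ i j, i ≠ j → NegPow (m i j)) (i j : ι) (k : ℤ) (hk : 0 < k) : (m i j).coeff k = 0 := by
  by_cases h : i = j
  · subst h; rw [hU.1 i]; exact one_coeff_pos k hk
  · exact hN i j h k hk.le

lemma kron_mul {S T : Type*} [Fintype S] [Fintype T] (a c : Matrix S S L) (b d : Matrix T T L) :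
    kron a b * kron c d = kron (a * c) (b * d) := by
  refine Matrix.ext fun p q => ?_
  simp only [Matrix.mul_apply, kron, Finset.sum_mul_sum, Fintype.sum_prod_type]
  exact Finset.sum_congr rfl fun x _ => Finset.sum_congr rfl fun y _ => by ring

lemma barMat_kron {S T : Type*} (a : Matrix S S L) (b : Matrix T T L) :
    barMat (kron a b) = kron (barMat a) (barMat b) := by
  ext p q
  simp [barMat, kron, map_mul]

lemma barMat_mul {ι : Type*} [Fintype ι] (a b : Matrix ι ι L) :
    barMat (a * b) = barMat a * barMat b := by
  ext i j
  simp [barMat, Matrix.mul_apply, map_sum, map_mul]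

lemma barMat_sub {ι : Type*} (a b : Matrix ι ι L) :
    barMat (a - b) = barMat a - barMat b := by
  ext i j
  simp [barMat, map_sub, Matrix.sub_apply]

lemma kron_one {S T : Type*} [DecidableEq S] [DecidableEq T] :
    kron (1 : Matrix S S L) (1 : Matrix T T L) = 1 := by
  ext p q
  simp only [kron, Matrix.one_apply, Prod.ext_iff, ite_mul, one_mul, zero_mul, mul_ite,
    mul_one, mul_zero]
  split_ifs with h1 h2 h3 <;> tauto

lemma unitri_kron {S T : Type*} [PartialOrder S] [PartialOrder T]
    {a : Matrix S S L} {b : Matrix T T L} (ha : Unitri a) (hb : Unitri b) :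
    Unitri (kron a b) := by
  constructor
  · intro p; simp [kron, ha.1, hb.1]
  · intro p q hpq
    rw [Prod.le_def, not_and_or] at hpq
    rcases hpq with h | h
    · simp [kron, ha.2 _ _ h]
    · simp [kron, hb.2 _ _ h]

/-- Uniqueness of the solution of the bar-invariance equation. -/
lemma uniq_sol {ι : Type*} [Fintype ι] [PartialOrder ι] (H d d' : Matrix ι ι L)
    (hU : Unitri H) (hd : Unitri d) (hd' : Unitri d')
    (hN : ∀ i j, i ≠ j → NegPow (d i j)) (hN' : ∀ i j, i ≠ j → NegPow (d' i j))
    (hE : d = barMat d * H) (hE' : d' = barMat d' * H) : d = d' := by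
  set f : Matrix ι ι L := d - d' with hf_def
  have hEf : f = barMat f * H := by
    rw [hf_def, barMat_sub, Matrix.sub_mul]
    rw [← hE, ← hE']
  have hdiag : ∀ i, f i i = 0 := fun i => by
    simp [hf_def, Matrix.sub_apply, hd.1, hd'.1]
  have htri : ∀ i j, ¬ j ≤ i → f i j = 0 := fun i j h => by
    simp [hf_def, Matrix.sub_apply, hd.2 i j h, hd'.2 i j h]
  have hneg : ∀ i j, i ≠ j → NegPow (f i j) := by
    intro i j h k hk
    have : f i j = d i j - d' i j := rfl
    rw [this, AddMonoidAlgebra.coeff_sub, Finsupp.sub_apply, hN i j h k hk, hN' i j h k hk, sub_zero]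
  have key : ∀ q p, f p q = 0 := by
    intro q
    induction q using WellFoundedGT.induction with
    | ind q IH =>
      intro p
      have heq : f p q = invert (f p q) := by
        conv_lhs => rw [hEf]
        rw [Matrix.mul_apply]
        rw [Finset.sum_eq_single q]
        · rw [barMat, hU.1, mul_one]
        · intro r _ hrq
          by_cases hqr : q ≤ r
          · have : q < r := lt_of_le_of_ne hqr (Ne.symm hrq)
            rw [show barMat f p r = 0 by simp [barMat, IH r this p]]
            exact zero_mul _
          · rw [hU.2 r q hqr, mul_zero]
        · intro h; exact absurd (Finset.mem_univ q) h
      by_cases hpq : p = q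
      · subst hpq; exact hdiag p
      · apply AddMonoidAlgebra.ext
        apply Finsupp.ext
        intro k
        rcases le_or_gt 0 k with hk | hk
        · exact hneg p q hpq k hk
        · calc (f p q).coeff k = (invert (f p q)).coeff k := by rw [← heq]
            _ = (f p q).coeff (-k) := invert_apply _ _
            _ = 0 := hneg p q hpq (-k) (by omega)
  have : f = 0 := by refine Matrix.ext fun p q => ?_; rw [key q p]; rfl
  exact sub_eq_zero.mp this

/-- If `h₁, h₂` are lower unitriangular with `h̄ᵢ = hᵢ⁻¹` and `dᵢ` are the (unique) lower
unitriangular matrices with off-diagonal entries in `v⁻¹ℤ[v⁻¹]` satisfying `dᵢ = d̄ᵢ hᵢ`,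
then `d₁ ⊗ d₂` is the unique lower unitriangular matrix with off-diagonal entries in
`v⁻¹ℤ[v⁻¹]` satisfying `d₁ ⊗ d₂ = (d₁ ⊗ d₂)‾ (h₁ ⊗ h₂)`. -/
theorem kron_of_bar_invariant_solutions {S T : Type*}
    [Fintype S] [DecidableEq S] [PartialOrder S]
    [Fintype T] [DecidableEq T] [PartialOrder T]
    (h₁ : Matrix S S L) (h₂ : Matrix T T L) (d₁ : Matrix S S L) (d₂ : Matrix T T L)
    (hU₁ : Unitri h₁) (hU₂ : Unitri h₂)
    (hB₁ : barMat h₁ * h₁ = 1) (hB₂ : barMat h₂ * h₂ = 1)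
    (dU₁ : Unitri d₁) (dU₂ : Unitri d₂)
    (dN₁ : ∀ i j, i ≠ j → NegPow (d₁ i j)) (dN₂ : ∀ i j, i ≠ j → NegPow (d₂ i j))
    (dE₁ : d₁ = barMat d₁ * h₁) (dE₂ : d₂ = barMat d₂ * h₂) :
    (Unitri (kron d₁ d₂) ∧ (∀ p q : S × T, p ≠ q → NegPow (kron d₁ d₂ p q)) ∧
        kron d₁ d₂ = barMat (kron d₁ d₂) * kron h₁ h₂) ∧
      ∀ d : Matrix (S × T) (S × T) L,
        Unitri d → (∀ p q, p ≠ q → NegPow (d p q)) → d = barMat d * kron h₁ h₂ →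
          d = kron d₁ d₂ := by
  have kU : Unitri (kron d₁ d₂) := unitri_kron dU₁ dU₂
  have kN : ∀ p q : S × T, p ≠ q → NegPow (kron d₁ d₂ p q) := by
    intro p q hpq
    have : p.1 ≠ q.1 ∨ p.2 ≠ q.2 := by
      by_contra h
      push_neg at h
      exact hpq (Prod.ext h.1 h.2)
    rcases this with h | h
    · exact negPow_mul (dN₁ _ _ h) (entries_nonpos dU₂ dN₂ _ _)
    · exact negPow_mul' (entries_nonpos dU₁ dN₁ _ _) (dN₂ _ _ h)
  have kE : kron d₁ d₂ = barMat (kron d₁ d₂) * kron h₁ h₂ := by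
    rw [barMat_kron, kron_mul, ← dE₁, ← dE₂]
  refine ⟨⟨kU, kN, kE⟩, ?_⟩
  intro d hUd hNd hEd
  exact uniq_sol (kron h₁ h₂) d (kron d₁ d₂) (unitri_kron hU₁ hU₂) hUd kU hNd kN hEd kE
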